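/- arXiv:0912.3126 — 3 statements merged into one kernel-verified Lean document; each statement's English description precedes it below -/
import Mathlib

section
/- Let h > 0 and let l₁ ≥ l₂ ≥ l₃ be real numbers with l₁ + l₂ + l₃ = t ≥ 0 and l₃ ≤ −h·t, and assume l₃ < 0. Then if t > 0 one has h/(2h + 1) ≤ −l₁/l₃ ≤ (2h + 1)/h, and if t = 0 one has 1/2 ≤ −l₁/l₃ ≤ 2. -/
/-- The **Claim** in the proof of Lemma 4.1: if `l₁ ≥ l₂ ≥ l₃`, `l₁ + l₂ + l₃ = t ≥ 0`,
`l₃ ≤ −h·t` with `h > 0`, and `l₃ < 0`, then `−l₁/l₃ ∈ [h/(2h+1), (2h+1)/h]` when `t > 0`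
and `−l₁/l₃ ∈ [1/2, 2]` when `t = 0`. -/
theorem claim_lemma_4_1 (h t l₁ l₂ l₃ : ℝ) (hh : 0 < h)
    (h12 : l₂ ≤ l₁) (h23 : l₃ ≤ l₂) (hsum : l₁ + l₂ + l₃ = t) (ht : 0 ≤ t)
    (hl₃t : l₃ ≤ -h * t) (hl₃ : l₃ < 0) :
    (0 < t → h / (2 * h + 1) ≤ -l₁ / l₃ ∧ -l₁ / l₃ ≤ (2 * h + 1) / h) ∧
    (t = 0 → 1 / 2 ≤ -l₁ / l₃ ∧ -l₁ / l₃ ≤ 2) := by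
  have hn : (0:ℝ) < -l₃ := by linarith
  have key : -l₁ / l₃ = l₁ / (-l₃) := by rw [neg_div, div_neg]
  rw [key]
  constructor
  · intro htp
    constructor
    · rw [div_le_div_iff₀ (by linarith) hn]
      nlinarith [mul_nonneg hh.le (show 0 ≤ 2 * l₁ - t + l₃ by linarith)]
    · rw [div_le_div_iff₀ hn hh]
      nlinarith [mul_nonneg hh.le (show 0 ≤ t - 2 * l₃ - l₁ by linarith)]
  · intro ht0
    subst ht0
    constructor
    · rw [div_le_div_iff₀ (by norm_num) hn]; linarith
    · rw [div_le_iff₀ hn]; linarith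
end

section
/- Let n ≥ 2 and let F₁, F₂ be symmetric n×n real matrices such that for every (α, β) ∈ ℝ²∖{(0,0)} the matrix αF₁ + βF₂ is strictly hyperbolic, i.e. has at least one strictly positive and at least one strictly negative eigenvalue. Then there exists a positive definite symmetric n×n matrix Q such that Tr(F₁·Q) = 0 and Tr(F₂·Q) = 0. -/
open Matrix

open Polynomial in
/-- The cubic form `P(X,Y,Z) = Re((oX·oY)·oZ)` on `ℝ⁸ × ℝ⁸ × ℝ⁸`. -/
noncomputable def P3 (X Y Z : EuclideanSpace ℝ (Fin 8)) : ℝ :=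
  X 0 * (Y 0 * Z 0 - Y 1 * Z 1 - Y 2 * Z 2 - Y 3 * Z 3 - Y 4 * Z 4 - Y 5 * Z 5 - Y 6 * Z 6 - Y 7 * Z 7) +
  X 1 * (-(Y 0 * Z 1) - Y 1 * Z 0 - Y 2 * Z 4 - Y 3 * Z 7 + Y 4 * Z 2 - Y 5 * Z 6 + Y 6 * Z 5 + Y 7 * Z 3) +
  X 2 * (-(Y 0 * Z 2) + Y 1 * Z 4 - Y 2 * Z 0 - Y 3 * Z 5 - Y 4 * Z 1 + Y 5 * Z 3 - Y 6 * Z 7 + Y 7 * Z 6) +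
  X 3 * (-(Y 0 * Z 3) + Y 1 * Z 7 + Y 2 * Z 5 - Y 3 * Z 0 - Y 4 * Z 6 - Y 5 * Z 2 + Y 6 * Z 4 - Y 7 * Z 1) +
  X 4 * (-(Y 0 * Z 4) - Y 1 * Z 2 + Y 2 * Z 1 + Y 3 * Z 6 - Y 4 * Z 0 - Y 5 * Z 7 - Y 6 * Z 3 + Y 7 * Z 5) +
  X 5 * (-(Y 0 * Z 5) + Y 1 * Z 6 - Y 2 * Z 3 + Y 3 * Z 2 + Y 4 * Z 7 - Y 5 * Z 0 - Y 6 * Z 1 - Y 7 * Z 4) +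
  X 6 * (-(Y 0 * Z 6) - Y 1 * Z 5 + Y 2 * Z 7 - Y 3 * Z 4 + Y 4 * Z 3 + Y 5 * Z 1 - Y 6 * Z 0 - Y 7 * Z 2) +
  X 7 * (-(Y 0 * Z 7) - Y 1 * Z 3 - Y 2 * Z 6 + Y 3 * Z 1 - Y 4 * Z 5 + Y 5 * Z 4 + Y 6 * Z 2 - Y 7 * Z 0)

/-- The `X`-part of a vector in `ℝ²⁴ = ℝ⁸ × ℝ⁸ × ℝ⁸`. -/
noncomputable def Xpart (v : EuclideanSpace ℝ (Fin 24)) : EuclideanSpace ℝ (Fin 8) :=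
  WithLp.toLp 2 fun i : Fin 8 => v ⟨i.1, by omega⟩

/-- The `Y`-part of a vector in `ℝ²⁴ = ℝ⁸ × ℝ⁸ × ℝ⁸`. -/
noncomputable def Ypart (v : EuclideanSpace ℝ (Fin 24)) : EuclideanSpace ℝ (Fin 8) :=
  WithLp.toLp 2 fun i : Fin 8 => v ⟨i.1 + 8, by omega⟩

/-- The `Z`-part of a vector in `ℝ²⁴ = ℝ⁸ × ℝ⁸ × ℝ⁸`. -/
noncomputable def Zpart (v : EuclideanSpace ℝ (Fin 24)) : EuclideanSpace ℝ (Fin 8) :=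
  WithLp.toLp 2 fun i : Fin 8 => v ⟨i.1 + 16, by omega⟩

/-- The octonionic triality cubic form on `ℝ²⁴`. -/
noncomputable def P24 (v : EuclideanSpace ℝ (Fin 24)) : ℝ :=
  P3 (Xpart v) (Ypart v) (Zpart v)

/-- `m(a) = |x|·|y|·|z|` for `a = (x,y,z) ∈ ℝ²⁴`. -/
noncomputable def mval (v : EuclideanSpace ℝ (Fin 24)) : ℝ :=
  ‖Xpart v‖ * ‖Ypart v‖ * ‖Zpart v‖

/-- The Hessian matrix of `f : ℝⁿ → ℝ` at `x`. -/
noncomputable def hessianMatrix {n : ℕ} (f : EuclideanSpace ℝ (Fin n) → ℝ)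
    (x : EuclideanSpace ℝ (Fin n)) : Matrix (Fin n) (Fin n) ℝ :=
  Matrix.of fun i j =>
    iteratedFDeriv ℝ 2 f x ![EuclideanSpace.single i 1, EuclideanSpace.single j 1]

/-- `lam` lists the eigenvalues of `A` in decreasing order with multiplicity. -/
def IsEigDecreasing {n : ℕ} (A : Matrix (Fin n) (Fin n) ℝ) (lam : Fin n → ℝ) : Prop :=
  Antitone lam ∧ A.charpoly = ∏ i, (Polynomial.X - Polynomial.C (lam i))

/-- The operator norm of a matrix, acting on Euclidean space. -/
noncomputable def opNorm {n : ℕ} (A : Matrix (Fin n) (Fin n) ℝ) : ℝ :=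
  ‖Matrix.toEuclideanCLM (𝕜 := ℝ) A‖

/-- `F` is uniformly elliptic with constant `C`. -/
def UniformlyElliptic {n : ℕ} (C : ℝ) (F : Matrix (Fin n) (Fin n) ℝ → ℝ) : Prop :=
  ∀ M N : Matrix (Fin n) (Fin n) ℝ, M.IsSymm → N.PosSemidef →
    C⁻¹ * opNorm N ≤ F (M + N) - F M ∧ F (M + N) - F M ≤ C * opNorm N

/-- `u` is a viscosity solution of `G(D²u) = 0` in `Ω`. -/
def IsViscositySolution {n : ℕ} (Ω : Set (EuclideanSpace ℝ (Fin n)))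
    (G : Matrix (Fin n) (Fin n) ℝ → ℝ) (u : EuclideanSpace ℝ (Fin n) → ℝ) : Prop :=
  ∀ x₀ ∈ Ω, ∀ φ : EuclideanSpace ℝ (Fin n) → ℝ, ContDiff ℝ 2 φ →
    (IsLocalMax (fun x => u x - φ x) x₀ → 0 ≤ G (hessianMatrix φ x₀)) ∧
    (IsLocalMin (fun x => u x - φ x) x₀ → G (hessianMatrix φ x₀) ≤ 0)

section Aux

open Polynomial in
private lemma charpoly_conj_aux {m : ℕ} (U D V : Matrix (Fin m) (Fin m) ℝ)
    (hUV : U * V = 1) : (U * D * V).charpoly = D.charpoly := by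
  have hUV' : U.map (C : ℝ →+* ℝ[X]) * V.map (C : ℝ →+* ℝ[X]) = 1 := by
    rw [← Matrix.map_mul, hUV, Matrix.map_one _ (map_zero C) (map_one C)]
  have hcomm : U.map (C : ℝ →+* ℝ[X]) * Matrix.scalar (Fin m) (X : ℝ[X]) *
      V.map (C : ℝ →+* ℝ[X]) = Matrix.scalar (Fin m) (X : ℝ[X]) := by
    rw [← (Matrix.scalar_commute (X : ℝ[X]) (fun r => Commute.all _ r) (U.map C)).eq,
      mul_assoc, hUV', mul_one]
  have key : Matrix.charmatrix (U * D * V)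
      = U.map (C : ℝ →+* ℝ[X]) * Matrix.charmatrix D * V.map (C : ℝ →+* ℝ[X]) := by
    unfold Matrix.charmatrix
    simp only [RingHom.mapMatrix_apply]
    rw [Matrix.mul_sub, Matrix.sub_mul, hcomm]
    congr 1
    simp [Matrix.map_mul]
  have hdet : (U.map (C : ℝ →+* ℝ[X])).det * (V.map (C : ℝ →+* ℝ[X])).det = 1 := by
    rw [← Matrix.det_mul, hUV', Matrix.det_one]
  rw [Matrix.charpoly, Matrix.charpoly, key, Matrix.det_mul, Matrix.det_mul]
  linear_combination (Matrix.charmatrix D).det * hdet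

open Polynomial in
private lemma exists_eig_decreasing {m : ℕ} (A : Matrix (Fin m) (Fin m) ℝ)
    (hA : A.IsHermitian) :
    ∃ lam : Fin m → ℝ, IsEigDecreasing A lam ∧
      ∀ i, ∃ v : Fin m → ℝ, v ⬝ᵥ v = 1 ∧ A *ᵥ v = lam i • v := by
  classical
  set μ : Fin m → ℝ := hA.eigenvalues with hμ
  have hchar : A.charpoly = ∏ i, (X - C (μ i)) := by
    have hU : (hA.eigenvectorUnitary : Matrix (Fin m) (Fin m) ℝ) *
        star (hA.eigenvectorUnitary : Matrix (Fin m) (Fin m) ℝ) = 1 :=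
      (Unitary.mem_iff.mp hA.eigenvectorUnitary.2).2
    have hspec := hA.spectral_theorem
    have hdiag : (Matrix.diagonal μ).charpoly = ∏ i, (X - C (μ i)) := by
      rw [Matrix.charpoly_of_upperTriangular _ (Matrix.blockTriangular_diagonal μ)]
      simp
    calc A.charpoly
        = ((hA.eigenvectorUnitary : Matrix (Fin m) (Fin m) ℝ) * Matrix.diagonal μ *
            star (hA.eigenvectorUnitary : Matrix (Fin m) (Fin m) ℝ)).charpoly := by
          have hod : (RCLike.ofReal ∘ hA.eigenvalues : Fin m → ℝ) = μ := by
            funext i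
            simp [hμ]
          rw [hod] at hspec
          conv_lhs => rw [hspec]
          rw [Unitary.conjStarAlgAut_apply]
      _ = (Matrix.diagonal μ).charpoly := charpoly_conj_aux _ _ _ hU
      _ = ∏ i, (X - C (μ i)) := hdiag
  set σ : Equiv.Perm (Fin m) := Tuple.sort μ with hσ
  refine ⟨fun i => μ (σ (Fin.rev i)), ⟨?_, ?_⟩, ?_⟩
  · intro i j hij
    exact Tuple.monotone_sort μ (Fin.rev_le_rev.mpr hij)
  · rw [hchar]
    exact (Equiv.prod_comp (Fin.revPerm.trans σ) fun j => X - C (μ j)).symm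
  · intro i
    set j := σ (Fin.rev i)
    refine ⟨(hA.eigenvectorBasis j : EuclideanSpace ℝ (Fin m)), ?_, ?_⟩
    · have hnorm : ‖hA.eigenvectorBasis j‖ = 1 := hA.eigenvectorBasis.orthonormal.1 j
      have : ((hA.eigenvectorBasis j : EuclideanSpace ℝ (Fin m)) : Fin m → ℝ) ⬝ᵥ
          ((hA.eigenvectorBasis j : EuclideanSpace ℝ (Fin m)) : Fin m → ℝ)
          = inner ℝ (hA.eigenvectorBasis j) (hA.eigenvectorBasis j) := by
        simp only [dotProduct, PiLp.inner_apply, RCLike.inner_apply, conj_trivial]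
      rw [this, real_inner_self_eq_norm_sq, hnorm]
      norm_num
    · exact hA.mulVec_eigenvectorBasis j

private lemma trace_mul_vecMulVec {m : ℕ} (F : Matrix (Fin m) (Fin m) ℝ) (v : Fin m → ℝ) :
    (F * Matrix.vecMulVec v v).trace = v ⬝ᵥ F *ᵥ v := by
  simp only [Matrix.trace, Matrix.diag, Matrix.mul_apply, Matrix.vecMulVec_apply,
    dotProduct, Matrix.mulVec, Finset.mul_sum]
  refine Finset.sum_congr rfl fun i _ => Finset.sum_congr rfl fun k _ => by ring

private lemma trace_mul_diag {m : ℕ} (F : Matrix (Fin m) (Fin m) ℝ) (δ : ℝ) :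
    (F * Matrix.diagonal (fun _ => δ)).trace = δ * F.trace := by
  simp only [Matrix.trace, Matrix.diag, Matrix.mul_diagonal, Finset.mul_sum]
  exact Finset.sum_congr rfl fun i _ => by ring

private lemma psd_smul_vecMulVec {m : ℕ} (c : ℝ) (hc : 0 ≤ c) (v : Fin m → ℝ) :
    (c • Matrix.vecMulVec v v).PosSemidef := by
  rw [Matrix.posSemidef_iff_dotProduct_mulVec]
  constructor
  · ext i k
    simp [Matrix.conjTranspose_apply, Matrix.vecMulVec_apply, mul_comm]
  · intro x
    have hx : x ⬝ᵥ ((Matrix.vecMulVec v v) *ᵥ x) = (v ⬝ᵥ x) * (v ⬝ᵥ x) := by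
      simp only [Matrix.mulVec, Matrix.vecMulVec_apply, dotProduct, Finset.mul_sum,
        Finset.sum_mul]
      refine Finset.sum_congr rfl fun i _ => Finset.sum_congr rfl fun k _ => by ring
    have : star x ⬝ᵥ ((c • Matrix.vecMulVec v v) *ᵥ x) = c * ((v ⬝ᵥ x) * (v ⬝ᵥ x)) := by
      rw [Matrix.smul_mulVec, dotProduct_smul, star_trivial, hx, smul_eq_mul]
    rw [this]
    exact mul_nonneg hc (mul_self_nonneg _)

end Aux

/-- **Lemma 5.2**: if every nontrivial linear combination `αF₁ + βF₂` of the symmetric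
matrices `F₁`, `F₂` is strictly hyperbolic (has a positive and a negative eigenvalue),
then some positive definite symmetric matrix `Q` satisfies `Tr(F₁Q) = Tr(F₂Q) = 0`. -/
theorem lemma_5_2 {n : ℕ} (hn : 2 ≤ n) (F₁ F₂ : Matrix (Fin n) (Fin n) ℝ)
    (hF₁ : F₁.IsSymm) (hF₂ : F₂.IsSymm)
    (hhyp : ∀ α β : ℝ, (α, β) ≠ (0, 0) →
      ∀ lam : Fin n → ℝ, IsEigDecreasing (α • F₁ + β • F₂) lam →
        0 < lam ⟨0, by omega⟩ ∧ lam ⟨n - 1, by omega⟩ < 0) :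
    ∃ Q : Matrix (Fin n) (Fin n) ℝ, Q.PosDef ∧ (F₁ * Q).trace = 0 ∧ (F₂ * Q).trace = 0 := by
  classical
  haveI : Nonempty (Fin n) := ⟨⟨0, by omega⟩⟩
  set q : (Fin n → ℝ) → ℝ × ℝ := fun v => (v ⬝ᵥ F₁ *ᵥ v, v ⬝ᵥ F₂ *ᵥ v) with hq
  set W : Set (ℝ × ℝ) := Set.range q with hWdef
  set Cs : Set (ℝ × ℝ) := convexHull ℝ W with hCdef
  have hCconv : Convex ℝ Cs := convex_convexHull ℝ W
  have hWC : W ⊆ Cs := subset_convexHull ℝ W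
  have h0W : (0 : ℝ × ℝ) ∈ W := ⟨0, by simp [hq, Prod.ext_iff]⟩
  have hfval : ∀ (f : (ℝ × ℝ) →ₗ[ℝ] ℝ) (p : ℝ × ℝ),
      f p = p.1 * f (1, 0) + p.2 * f (0, 1) := by
    intro f p
    have hp : p = p.1 • ((1 : ℝ), (0 : ℝ)) + p.2 • ((0 : ℝ), (1 : ℝ)) := by
      refine Prod.ext_iff.mpr ⟨by simp, by simp⟩
    conv_lhs => rw [hp]
    rw [map_add, _root_.map_smul, _root_.map_smul, smul_eq_mul, smul_eq_mul]
  have hpos : ∀ f : (ℝ × ℝ) →ₗ[ℝ] ℝ, f ≠ 0 → ∃ wp ∈ W, 0 < f wp := by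
    intro f hf
    set α := f (1, 0) with hα
    set β := f (0, 1) with hβ
    have hab : ¬(α = 0 ∧ β = 0) := by
      rintro ⟨h1, h2⟩
      apply hf
      apply LinearMap.ext
      intro p
      rw [LinearMap.zero_apply, hfval f p, ← hα, ← hβ, h1, h2]
      ring
    have hab' : (α, β) ≠ ((0 : ℝ), (0 : ℝ)) := by
      rw [Ne, Prod.mk.injEq]
      exact hab
    set G : Matrix (Fin n) (Fin n) ℝ := α • F₁ + β • F₂ with hG
    have hGherm : G.IsHermitian := by
      rw [Matrix.IsHermitian, Matrix.conjTranspose_eq_transpose_of_trivial, hG,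
        Matrix.transpose_add, Matrix.transpose_smul, Matrix.transpose_smul, hF₁.eq, hF₂.eq]
    obtain ⟨lam, hlam, hvec⟩ := exists_eig_decreasing G hGherm
    obtain ⟨hlpos, _⟩ := hhyp α β hab' lam hlam
    obtain ⟨v, hv1, hvA⟩ := hvec ⟨0, by omega⟩
    refine ⟨q v, ⟨v, rfl⟩, ?_⟩
    have hfq : f (q v) = v ⬝ᵥ G *ᵥ v := by
      rw [hfval f (q v), ← hα, ← hβ]
      simp only [hq, hG]
      rw [Matrix.add_mulVec, Matrix.smul_mulVec, Matrix.smul_mulVec,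
        dotProduct_add, dotProduct_smul, dotProduct_smul]
      simp only [smul_eq_mul]
      ring
    rw [hfq, hvA, dotProduct_smul, hv1, smul_eq_mul, mul_one]
    exact hlpos
  have hint : (0 : ℝ × ℝ) ∈ interior Cs := by
    by_contra h0
    obtain ⟨f, hf0, hfle⟩ : ∃ f : (ℝ × ℝ) →ₗ[ℝ] ℝ, f ≠ 0 ∧ ∀ w ∈ Cs, f w ≤ 0 := by
      rcases Set.eq_empty_or_nonempty (interior Cs) with hemp | ⟨x₀, hx₀⟩
      · have hspan : ¬ affineSpan ℝ Cs = ⊤ := by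
          rw [← hCconv.interior_nonempty_iff_affineSpan_eq_top, hemp]
          simp
        have h0C : (0 : ℝ × ℝ) ∈ Cs := hWC h0W
        have h0span : (0 : ℝ × ℝ) ∈ affineSpan ℝ Cs := subset_affineSpan ℝ Cs h0C
        have hVne : (affineSpan ℝ Cs).direction ≠ ⊤ := by
          intro hV
          exact hspan ((AffineSubspace.direction_eq_top_iff_of_nonempty ⟨0, h0span⟩).mp hV)
        obtain ⟨f, hf, hmap⟩ := Submodule.exists_dual_map_eq_bot_of_lt_top
          (lt_top_iff_ne_top.mpr hVne) inferInstance
        refine ⟨f, hf, fun w hw => ?_⟩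
        have hwV : w ∈ (affineSpan ℝ Cs).direction := by
          have := AffineSubspace.vsub_mem_direction (subset_affineSpan ℝ Cs hw) h0span
          simpa using this
        have hfw : f w ∈ Submodule.map f (affineSpan ℝ Cs).direction :=
          Submodule.mem_map_of_mem hwV
        rw [hmap, Submodule.mem_bot] at hfw
        exact hfw.le
      · obtain ⟨g, hg⟩ := geometric_hahn_banach_open_point
          hCconv.interior isOpen_interior h0
        have hg0 : ∀ a ∈ interior Cs, g a < 0 := by
          intro a ha
          simpa using hg a ha
        refine ⟨g.toLinearMap, ?_, ?_⟩
        · intro hgz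
          have hx0 : g x₀ = 0 := by
            have := congrArg (fun F : (ℝ × ℝ) →ₗ[ℝ] ℝ => F x₀) hgz
            simpa using this
          exact absurd hx0 (hg0 x₀ hx₀).ne
        · intro w hw
          by_contra hfw
          push_neg at hfw
          have hd : (0 : ℝ) < g w := hfw
          have hc : g x₀ < 0 := hg0 x₀ hx₀
          set c := g x₀ with hcdef
          set d := g w with hddef
          have hdc : 0 < d - c := by linarith
          have hz : (d / (d - c)) • x₀ + (-c / (d - c)) • w ∈ interior Cs :=
            hCconv.combo_interior_closure_mem_interior hx₀ (subset_closure hw)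
              (div_pos hd hdc) (div_nonneg (by linarith) hdc.le)
              (by rw [← add_div, show d + -c = d - c by ring]; exact div_self hdc.ne')
          have hlt := hg0 _ hz
          rw [map_add, _root_.map_smul, _root_.map_smul, smul_eq_mul, smul_eq_mul, ← hcdef, ← hddef] at hlt
          have hzero : d / (d - c) * c + -c / (d - c) * d = 0 := by
            field_simp
            ring
          linarith
    obtain ⟨wp, hwpW, hwp⟩ := hpos f hf0
    have := hfle wp (hWC hwpW)
    linarith
  obtain ⟨ε, hε, hball⟩ := Metric.isOpen_iff.mp isOpen_interior 0 hint
  set T : ℝ × ℝ := (F₁.trace, F₂.trace) with hT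
  set δ : ℝ := ε / (2 * (‖T‖ + 1)) with hδdef
  have hδ : 0 < δ := by positivity
  have hmem : (-δ) • T ∈ Cs := by
    refine interior_subset (hball ?_)
    rw [Metric.mem_ball, dist_zero_right, norm_smul]
    have h1 : ‖(-δ : ℝ)‖ = δ := by
      rw [norm_neg, Real.norm_of_nonneg hδ.le]
    rw [h1]
    have h2 : (0 : ℝ) < ‖T‖ + 1 := by positivity
    have h3 : δ * ‖T‖ ≤ δ * (‖T‖ + 1) := by nlinarith [norm_nonneg T]
    have h4 : δ * (‖T‖ + 1) = ε / 2 := by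
      rw [hδdef]
      field_simp
    linarith
  rw [hCdef, convexHull_eq] at hmem
  obtain ⟨ι, t, wt, z, hw0, hw1, hzW, hcm⟩ := hmem
  rw [Finset.centerMass_eq_of_sum_1 _ _ hw1] at hcm
  have hzW' : ∀ i ∈ t, ∃ v : Fin n → ℝ, q v = z i := by
    intro i hi
    have := hzW i hi
    rwa [hWdef, Set.mem_range] at this
  choose vv hvv using fun i : {x // x ∈ t} => hzW' i i.2
  set Q : Matrix (Fin n) (Fin n) ℝ :=
    Matrix.diagonal (fun _ => δ) + ∑ i ∈ t.attach, wt ↑i • Matrix.vecMulVec (vv i) (vv i)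
    with hQ
  have htr : ∀ F : Matrix (Fin n) (Fin n) ℝ, (F * Q).trace
      = δ * F.trace + ∑ i ∈ t.attach, wt ↑i * (vv i ⬝ᵥ F *ᵥ vv i) := by
    intro F
    rw [hQ, Matrix.mul_add, Matrix.trace_add, trace_mul_diag, Matrix.mul_sum,
      Matrix.trace_sum]
    congr 1
    refine Finset.sum_congr rfl fun i _ => ?_
    rw [Matrix.mul_smul, Matrix.trace_smul, trace_mul_vecMulVec, smul_eq_mul]
  have hsum1 : ∑ i ∈ t.attach, wt ↑i * (vv i ⬝ᵥ F₁ *ᵥ vv i) = -δ * F₁.trace := by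
    calc ∑ i ∈ t.attach, wt ↑i * (vv i ⬝ᵥ F₁ *ᵥ vv i)
        = ∑ i ∈ t.attach, wt ↑i * (z ↑i).1 := by
          refine Finset.sum_congr rfl fun i _ => ?_
          rw [← hvv i]
      _ = ∑ i ∈ t, wt i * (z i).1 := Finset.sum_attach t (fun i => wt i * (z i).1)
      _ = (∑ i ∈ t, wt i • z i).1 := by
          rw [Prod.fst_sum]
          exact Finset.sum_congr rfl fun i _ => by simp
      _ = ((-δ) • T).1 := by rw [hcm]
      _ = -δ * F₁.trace := by simp [hT]
  have hsum2 : ∑ i ∈ t.attach, wt ↑i * (vv i ⬝ᵥ F₂ *ᵥ vv i) = -δ * F₂.trace := by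
    calc ∑ i ∈ t.attach, wt ↑i * (vv i ⬝ᵥ F₂ *ᵥ vv i)
        = ∑ i ∈ t.attach, wt ↑i * (z ↑i).2 := by
          refine Finset.sum_congr rfl fun i _ => ?_
          rw [← hvv i]
      _ = ∑ i ∈ t, wt i * (z i).2 := Finset.sum_attach t (fun i => wt i * (z i).2)
      _ = (∑ i ∈ t, wt i • z i).2 := by
          rw [Prod.snd_sum]
          exact Finset.sum_congr rfl fun i _ => by simp
      _ = ((-δ) • T).2 := by rw [hcm]
      _ = -δ * F₂.trace := by simp [hT]
  refine ⟨Q, ?_, ?_, ?_⟩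
  · rw [hQ]
    apply Matrix.PosDef.add_posSemidef
    · exact Matrix.posDef_diagonal_iff.mpr fun _ => hδ
    · refine Finset.sum_induction _ _ (fun a b ha hb => ha.add hb) Matrix.PosSemidef.zero ?_
      intro i _
      exact psd_smul_vecMulVec _ (hw0 ↑i i.2) _
  · rw [htr F₁, hsum1]
    ring
  · rw [htr F₂, hsum2]
    ring
end

section
/- For s = (s₀,s₁,s₂,s₃) ∈ ℝ⁴ define the 4×4 matrices M_s with rows (s₀,−s₁,−s₂,−s₃), (−s₁,−s₀,−s₃,s₂), (−s₂,s₃,−s₀,−s₁), (−s₃,−s₂,s₁,−s₀) and L_s with rows (−s₀,−s₁,s₂,−s₃), (s₁,−s₀,−s₃,−s₂), (−s₂,s₃,−s₀,−s₁), (s₃,s₂,s₁,−s₀). For r, s, t ∈ ℝ⁴ let p := P(X,Y,Z) where X = (r₀,r₁,r₂,0,r₃,0,0,0), Y = (s₀,s₁,s₂,0,s₃,0,0,0), Z = (t₀,t₁,t₂,0,t₃,0,0,0), and let m := |r|²·|s|²·|t|². Then det(T·I₄ − M_r·M_s·M_t) = (T² − m)(T² + 2pT + m) and det(T·I₄ −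 L_r·L_s·L_t) = (T² + 2pT + m)². -/
open Matrix

/-- The matrix `M_s`, `s ∈ ℝ⁴`. -/
noncomputable def Mmat (s : EuclideanSpace ℝ (Fin 4)) : Matrix (Fin 4) (Fin 4) ℝ :=
  !![s 0, -s 1, -s 2, -s 3;
     -s 1, -s 0, -s 3, s 2;
     -s 2, s 3, -s 0, -s 1;
     -s 3, -s 2, s 1, -s 0]

/-- The matrix `L_s`, `s ∈ ℝ⁴`. -/
noncomputable def Lmat (s : EuclideanSpace ℝ (Fin 4)) : Matrix (Fin 4) (Fin 4) ℝ :=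
  !![-s 0, -s 1, s 2, -s 3;
     s 1, -s 0, -s 3, -s 2;
     -s 2, s 3, -s 0, -s 1;
     s 3, s 2, s 1, -s 0]

/-- The embedding `ℝ⁴ → ℝ⁸`, `(s₀,s₁,s₂,s₃) ↦ (s₀,s₁,s₂,0,s₃,0,0,0)`, corresponding to
the quaternion subalgebra spanned by `1, e₁, e₂, e₄`. -/
noncomputable def embedQ (s : EuclideanSpace ℝ (Fin 4)) : EuclideanSpace ℝ (Fin 8) :=
  WithLp.toLp 2 ![s 0, s 1, s 2, 0, s 3, 0, 0, 0]

open Polynomial in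


lemma norm_sq4 (r : EuclideanSpace ℝ (Fin 4)) : ‖r‖^2 = r 0^2 + r 1^2 + r 2^2 + r 3^2 := by
  simp [EuclideanSpace.norm_eq, Fin.sum_univ_four,
    Real.sq_sqrt (by positivity : (0:ℝ) ≤ r 0^2 + r 1^2 + r 2^2 + r 3^2)]

lemma embedQ0 (s : EuclideanSpace ℝ (Fin 4)) : embedQ s 0 = s 0 := rfl
lemma embedQ1 (s : EuclideanSpace ℝ (Fin 4)) : embedQ s 1 = s 1 := rfl
lemma embedQ2 (s : EuclideanSpace ℝ (Fin 4)) : embedQ s 2 = s 2 := rfl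
lemma embedQ3 (s : EuclideanSpace ℝ (Fin 4)) : embedQ s 3 = 0 := rfl
lemma embedQ4 (s : EuclideanSpace ℝ (Fin 4)) : embedQ s 4 = s 3 := rfl
lemma embedQ5 (s : EuclideanSpace ℝ (Fin 4)) : embedQ s 5 = 0 := rfl
lemma embedQ6 (s : EuclideanSpace ℝ (Fin 4)) : embedQ s 6 = 0 := rfl
lemma embedQ7 (s : EuclideanSpace ℝ (Fin 4)) : embedQ s 7 = 0 := rfl

lemma P3q (r s t : EuclideanSpace ℝ (Fin 4)) :
    P3 (embedQ r) (embedQ s) (embedQ t) =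
      r 0 * (s 0 * t 0 - s 1 * t 1 - s 2 * t 2 - s 3 * t 3) +
      r 1 * (-(s 0 * t 1) - s 1 * t 0 - s 2 * t 3 + s 3 * t 2) +
      r 2 * (-(s 0 * t 2) + s 1 * t 3 - s 2 * t 0 - s 3 * t 1) +
      r 3 * (-(s 0 * t 3) - s 1 * t 2 + s 2 * t 1 - s 3 * t 0) := by
  simp only [P3, embedQ0, embedQ1, embedQ2, embedQ3, embedQ4, embedQ5, embedQ6, embedQ7]
  ring

lemma Mmat_00 (s : EuclideanSpace ℝ (Fin 4)) : Mmat s 0 0 = s 0 := rfl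
lemma Mmat_01 (s : EuclideanSpace ℝ (Fin 4)) : Mmat s 0 1 = -s 1 := rfl
lemma Mmat_02 (s : EuclideanSpace ℝ (Fin 4)) : Mmat s 0 2 = -s 2 := rfl
lemma Mmat_03 (s : EuclideanSpace ℝ (Fin 4)) : Mmat s 0 3 = -s 3 := rfl
lemma Mmat_10 (s : EuclideanSpace ℝ (Fin 4)) : Mmat s 1 0 = -s 1 := rfl
lemma Mmat_11 (s : EuclideanSpace ℝ (Fin 4)) : Mmat s 1 1 = -s 0 := rfl
lemma Mmat_12 (s : EuclideanSpace ℝ (Fin 4)) : Mmat s 1 2 = -s 3 := rfl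
lemma Mmat_13 (s : EuclideanSpace ℝ (Fin 4)) : Mmat s 1 3 = s 2 := rfl
lemma Mmat_20 (s : EuclideanSpace ℝ (Fin 4)) : Mmat s 2 0 = -s 2 := rfl
lemma Mmat_21 (s : EuclideanSpace ℝ (Fin 4)) : Mmat s 2 1 = s 3 := rfl
lemma Mmat_22 (s : EuclideanSpace ℝ (Fin 4)) : Mmat s 2 2 = -s 0 := rfl
lemma Mmat_23 (s : EuclideanSpace ℝ (Fin 4)) : Mmat s 2 3 = -s 1 := rfl
lemma Mmat_30 (s : EuclideanSpace ℝ (Fin 4)) : Mmat s 3 0 = -s 3 := rfl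
lemma Mmat_31 (s : EuclideanSpace ℝ (Fin 4)) : Mmat s 3 1 = -s 2 := rfl
lemma Mmat_32 (s : EuclideanSpace ℝ (Fin 4)) : Mmat s 3 2 = s 1 := rfl
lemma Mmat_33 (s : EuclideanSpace ℝ (Fin 4)) : Mmat s 3 3 = -s 0 := rfl
lemma Lmat_00 (s : EuclideanSpace ℝ (Fin 4)) : Lmat s 0 0 = -s 0 := rfl
lemma Lmat_01 (s : EuclideanSpace ℝ (Fin 4)) : Lmat s 0 1 = -s 1 := rfl
lemma Lmat_02 (s : EuclideanSpace ℝ (Fin 4)) : Lmat s 0 2 = s 2 := rfl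
lemma Lmat_03 (s : EuclideanSpace ℝ (Fin 4)) : Lmat s 0 3 = -s 3 := rfl
lemma Lmat_10 (s : EuclideanSpace ℝ (Fin 4)) : Lmat s 1 0 = s 1 := rfl
lemma Lmat_11 (s : EuclideanSpace ℝ (Fin 4)) : Lmat s 1 1 = -s 0 := rfl
lemma Lmat_12 (s : EuclideanSpace ℝ (Fin 4)) : Lmat s 1 2 = -s 3 := rfl
lemma Lmat_13 (s : EuclideanSpace ℝ (Fin 4)) : Lmat s 1 3 = -s 2 := rfl
lemma Lmat_20 (s : EuclideanSpace ℝ (Fin 4)) : Lmat s 2 0 = -s 2 := rfl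
lemma Lmat_21 (s : EuclideanSpace ℝ (Fin 4)) : Lmat s 2 1 = s 3 := rfl
lemma Lmat_22 (s : EuclideanSpace ℝ (Fin 4)) : Lmat s 2 2 = -s 0 := rfl
lemma Lmat_23 (s : EuclideanSpace ℝ (Fin 4)) : Lmat s 2 3 = -s 1 := rfl
lemma Lmat_30 (s : EuclideanSpace ℝ (Fin 4)) : Lmat s 3 0 = s 3 := rfl
lemma Lmat_31 (s : EuclideanSpace ℝ (Fin 4)) : Lmat s 3 1 = s 2 := rfl
lemma Lmat_32 (s : EuclideanSpace ℝ (Fin 4)) : Lmat s 3 2 = s 1 := rfl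
lemma Lmat_33 (s : EuclideanSpace ℝ (Fin 4)) : Lmat s 3 3 = -s 0 := rfl

theorem det_four (M : Matrix (Fin 4) (Fin 4) ℝ) :
    M.det = M 0 0*M 1 1*M 2 2*M 3 3 - M 0 0*M 1 1*M 2 3*M 3 2 - M 0 0*M 1 2*M 2 1*M 3 3 + M 0 0*M 1 2*M 2 3*M 3 1 + M 0 0*M 1 3*M 2 1*M 3 2 - M 0 0*M 1 3*M 2 2*M 3 1 - M 0 1*M 1 0*M 2 2*M 3 3 + M 0 1*M 1 0*M 2 3*M 3 2 + M 0 1*M 1 2*M 2 0*M 3 3 - M 0 1*M 1 2*M 2 3*M 3 0 - M 0 1*M 1 3*M 2 0*M 3 2 + M 0 1*M 1 3*M 2 2*M 3 0 + M 0 2*M 1 0*M 2 1*M 3 3 - M 0 2*M 1 0*M 2 3*M 3 1 - M 0 2*M 1 1*M 2 0*M 3 3 + M 0 2*M 1 1*M 2 3*M 3 0 + M 0 2*M 1 3*M 2 0*M 3 1 - M 0 2*M 1 3*M 2 1*M 3 0 - M 0 3*M 1 0*M 2 1*M 3 2 + M 0 3*M 1 0*M 2 2*M 3 1 + M 0 3*M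 1 1*M 2 0*M 3 2 - M 0 3*M 1 1*M 2 2*M 3 0 - M 0 3*M 1 2*M 2 0*M 3 1 + M 0 3*M 1 2*M 2 1*M 3 0 := by
  rw [Matrix.det_succ_row_zero]
  simp [Fin.sum_univ_succ, Matrix.det_fin_three, Fin.succAbove,
    show (Fin.succ 2 : Fin 4) = 3 from rfl, show (Fin.castSucc 2 : Fin 4) = 2 from rfl]
  ring

open Polynomial in
lemma eval_charpoly4 (A : Matrix (Fin 4) (Fin 4) ℝ) (x : ℝ) :
    (A.charpoly).eval x = (x • (1 : Matrix (Fin 4) (Fin 4) ℝ) - A).det := by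
  rw [Matrix.charpoly, ← Polynomial.coe_evalRingHom, RingHom.map_det]
  congr 1
  ext i j
  by_cases h : i = j <;>
    simp [h, charmatrix_apply, Matrix.one_apply, Matrix.diagonal_apply]

open Polynomial in
set_option maxHeartbeats 1000000 in
theorem charpoly_four (A : Matrix (Fin 4) (Fin 4) ℝ) :
    A.charpoly = X^4 - C (A 0 0 + A 1 1 + A 2 2 + A 3 3) * X^3 + C ((A 0 0*A 1 1 - A 0 1*A 1 0) + (A 0 0*A 2 2 - A 0 2*A 2 0) + (A 0 0*A 3 3 - A 0 3*A 3 0) + (A 1 1*A 2 2 - A 1 2*A 2 1) + (A 1 1*A 3 3 - A 1 3*A 3 1) + (A 2 2*A 3 3 - A 2 3*A 3 2)) * X^2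
      - C ((A 1 1*A 2 2*A 3 3 - A 1 1*A 2 3*A 3 2 - A 1 2*A 2 1*A 3 3 + A 1 2*A 2 3*A 3 1 + A 1 3*A 2 1*A 3 2 - A 1 3*A 2 2*A 3 1) + (A 0 0*A 2 2*A 3 3 - A 0 0*A 2 3*A 3 2 - A 0 2*A 2 0*A 3 3 + A 0 2*A 2 3*A 3 0 + A 0 3*A 2 0*A 3 2 - A 0 3*A 2 2*A 3 0) + (A 0 0*A 1 1*A 3 3 - A 0 0*A 1 3*A 3 1 - A 0 1*A 1 0*A 3 3 + A 0 1*A 1 3*A 3 0 + A 0 3*A 1 0*A 3 1 - A 0 3*A 1 1*A 3 0) + (A 0 0*A 1 1*A 2 2 - A 0 0*A 1 2*A 2 1 - A 0 1*A 1 0*A 2 2 + A 0 1*A 1 2*A 2 0 + A 0 2*A 1 0*A 2 1 - A 0 2*A 1 1*A 2 0)) * X + C (A 0 0*A 1 1*A 2 2*A 3 3 - A 0 0*A 1 1*A 2 3*A 3 2 - A 0 0*A 1 2*A 2 1*A 3 3 + A 0 0*A 1 2*A 2 3*A 3 1 + A 0 0*A 1 3*A 2 1*A 3 2 - A 0 0*A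 1 3*A 2 2*A 3 1 - A 0 1*A 1 0*A 2 2*A 3 3 + A 0 1*A 1 0*A 2 3*A 3 2 + A 0 1*A 1 2*A 2 0*A 3 3 - A 0 1*A 1 2*A 2 3*A 3 0 - A 0 1*A 1 3*A 2 0*A 3 2 + A 0 1*A 1 3*A 2 2*A 3 0 + A 0 2*A 1 0*A 2 1*A 3 3 - A 0 2*A 1 0*A 2 3*A 3 1 - A 0 2*A 1 1*A 2 0*A 3 3 + A 0 2*A 1 1*A 2 3*A 3 0 + A 0 2*A 1 3*A 2 0*A 3 1 - A 0 2*A 1 3*A 2 1*A 3 0 - A 0 3*A 1 0*A 2 1*A 3 2 + A 0 3*A 1 0*A 2 2*A 3 1 + A 0 3*A 1 1*A 2 0*A 3 2 - A 0 3*A 1 1*A 2 2*A 3 0 - A 0 3*A 1 2*A 2 0*A 3 1 + A 0 3*A 1 2*A 2 1*A 3 0) := by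
  apply Polynomial.funext
  intro x
  rw [eval_charpoly4, det_four]
  simp only [Matrix.sub_apply, Matrix.smul_apply, show ((1:Matrix (Fin 4) (Fin 4) ℝ) 0 0) = 1 from rfl, show ((1:Matrix (Fin 4) (Fin 4) ℝ) 0 1) = 0 from rfl, show ((1:Matrix (Fin 4) (Fin 4) ℝ) 0 2) = 0 from rfl, show ((1:Matrix (Fin 4) (Fin 4) ℝ) 0 3) = 0 from rfl, show ((1:Matrix (Fin 4) (Fin 4) ℝ) 1 0) = 0 from rfl, show ((1:Matrix (Fin 4) (Fin 4) ℝ) 1 1) = 1 from rfl, show ((1:Matrix (Fin 4) (Fin 4) ℝ) 1 2) = 0 from rfl, show ((1:Matrix (Fin 4) (Fin 4) ℝ) 1 3) = 0 from rfl, show ((1:Matrix (Fin 4) (Fin 4) ℝ) 2 0) = 0 from rfl, show ((1:Matrix (Fin 4) (Fin 4) ℝ) 2 1) = 0 from rfl, show ((1:Matrix (Fin 4) (Fin 4) ℝ) 2 2) = 1 from rfl, show ((1:Matrix (Fin 4) (Fin 4) ℝ) 2 3) = 0 from rfl, show ((1:Matrix (Fin 4) (Fin 4) ℝ) 3 0)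 = 0 from rfl, show ((1:Matrix (Fin 4) (Fin 4) ℝ) 3 1) = 0 from rfl, show ((1:Matrix (Fin 4) (Fin 4) ℝ) 3 2) = 0 from rfl, show ((1:Matrix (Fin 4) (Fin 4) ℝ) 3 3) = 1 from rfl, eval_add, eval_sub,
    eval_mul, eval_pow, eval_C, eval_X, smul_eq_mul, mul_one, mul_zero, zero_sub, sub_zero]
  ring

lemma trace_four (A : Matrix (Fin 4) (Fin 4) ℝ) :
    A.trace = A 0 0 + A 1 1 + A 2 2 + A 3 3 := by
  simp [Matrix.trace, Matrix.diag, Fin.sum_univ_four]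

set_option maxHeartbeats 1000000 in
lemma trace_adj_four (A : Matrix (Fin 4) (Fin 4) ℝ) :
    (A.adjugate).trace = (A 1 1*A 2 2*A 3 3 - A 1 1*A 2 3*A 3 2 - A 1 2*A 2 1*A 3 3 + A 1 2*A 2 3*A 3 1 + A 1 3*A 2 1*A 3 2 - A 1 3*A 2 2*A 3 1) + (A 0 0*A 2 2*A 3 3 - A 0 0*A 2 3*A 3 2 - A 0 2*A 2 0*A 3 3 + A 0 2*A 2 3*A 3 0 + A 0 3*A 2 0*A 3 2 - A 0 3*A 2 2*A 3 0) + (A 0 0*A 1 1*A 3 3 - A 0 0*A 1 3*A 3 1 - A 0 1*A 1 0*A 3 3 + A 0 1*A 1 3*A 3 0 + A 0 3*A 1 0*A 3 1 - A 0 3*A 1 1*A 3 0) + (A 0 0*A 1 1*A 2 2 - A 0 0*A 1 2*A 2 1 - A 0 1*A 1 0*A 2 2 + A 0 1*A 1 2*A 2 0 + A 0 2*A 1 0*A 2 1 - A 0 2*A 1 1*A 2 0) := by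
  rw [trace_four]
  simp only [Matrix.adjugate_apply]
  rw [det_four, det_four, det_four, det_four]
  simp [Matrix.updateRow_apply, Pi.single_apply]
  try ring

lemma det_Mmat (s : EuclideanSpace ℝ (Fin 4)) : (Mmat s).det = -((‖s‖^2)^2) := by
  rw [det_four]
  simp only [Mmat_00, Mmat_01, Mmat_02, Mmat_03, Mmat_10, Mmat_11, Mmat_12, Mmat_13, Mmat_20, Mmat_21, Mmat_22, Mmat_23, Mmat_30, Mmat_31, Mmat_32, Mmat_33, norm_sq4]
  ring

lemma det_Lmat (s : EuclideanSpace ℝ (Fin 4)) : (Lmat s).det = ((‖s‖^2)^2) := by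
  rw [det_four]
  simp only [Lmat_00, Lmat_01, Lmat_02, Lmat_03, Lmat_10, Lmat_11, Lmat_12, Lmat_13, Lmat_20, Lmat_21, Lmat_22, Lmat_23, Lmat_30, Lmat_31, Lmat_32, Lmat_33, norm_sq4]
  ring


lemma ext_fin4 {A B : Matrix (Fin 4) (Fin 4) ℝ}
    (h00 : A 0 0 = B 0 0) (h01 : A 0 1 = B 0 1) (h02 : A 0 2 = B 0 2) (h03 : A 0 3 = B 0 3)
    (h10 : A 1 0 = B 1 0) (h11 : A 1 1 = B 1 1) (h12 : A 1 2 = B 1 2) (h13 : A 1 3 = B 1 3)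
    (h20 : A 2 0 = B 2 0) (h21 : A 2 1 = B 2 1) (h22 : A 2 2 = B 2 2) (h23 : A 2 3 = B 2 3)
    (h30 : A 3 0 = B 3 0) (h31 : A 3 1 = B 3 1) (h32 : A 3 2 = B 3 2) (h33 : A 3 3 = B 3 3) :
    A = B := by
  ext i j
  fin_cases i <;> fin_cases j <;> assumption

set_option maxHeartbeats 2000000 in
lemma BBt_Mmat (r s t : EuclideanSpace ℝ (Fin 4)) :
    (Mmat r * Mmat s * Mmat t) * (Mmat r * Mmat s * Mmat t)ᵀ
      = (‖r‖ ^ 2 * ‖s‖ ^ 2 * ‖t‖ ^ 2) • (1 : Matrix (Fin 4) (Fin 4) ℝ) := by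
  refine ext_fin4 ?_ ?_ ?_ ?_ ?_ ?_ ?_ ?_ ?_ ?_ ?_ ?_ ?_ ?_ ?_ ?_ <;>
    (simp only [Matrix.mul_apply, Matrix.transpose_apply, Fin.sum_univ_four, Mmat_00, Mmat_01, Mmat_02, Mmat_03, Mmat_10, Mmat_11, Mmat_12, Mmat_13, Mmat_20, Mmat_21, Mmat_22, Mmat_23, Mmat_30, Mmat_31, Mmat_32, Mmat_33,
      Matrix.smul_apply, show ((1:Matrix (Fin 4) (Fin 4) ℝ) 0 0) = 1 from rfl, show ((1:Matrix (Fin 4) (Fin 4) ℝ) 0 1) = 0 from rfl, show ((1:Matrix (Fin 4) (Fin 4) ℝ) 0 2) = 0 from rfl, show ((1:Matrix (Fin 4) (Fin 4) ℝ) 0 3) = 0 from rfl, show ((1:Matrix (Fin 4) (Fin 4) ℝ) 1 0) = 0 from rfl, show ((1:Matrix (Fin 4) (Fin 4) ℝ) 1 1) = 1 from rfl, show ((1:Matrix (Fin 4) (Fin 4) ℝ) 1 2) = 0 from rfl, show ((1:Matrix (Fin 4) (Fin 4) ℝ) 1 3) = 0 from rfl, show ((1:Matrix (Fin 4) (Fin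 4) ℝ) 2 0) = 0 from rfl, show ((1:Matrix (Fin 4) (Fin 4) ℝ) 2 1) = 0 from rfl, show ((1:Matrix (Fin 4) (Fin 4) ℝ) 2 2) = 1 from rfl, show ((1:Matrix (Fin 4) (Fin 4) ℝ) 2 3) = 0 from rfl, show ((1:Matrix (Fin 4) (Fin 4) ℝ) 3 0) = 0 from rfl, show ((1:Matrix (Fin 4) (Fin 4) ℝ) 3 1) = 0 from rfl, show ((1:Matrix (Fin 4) (Fin 4) ℝ) 3 2) = 0 from rfl, show ((1:Matrix (Fin 4) (Fin 4) ℝ) 3 3) = 1 from rfl, smul_eq_mul, mul_one, mul_zero, norm_sq4]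
     ring)

set_option maxHeartbeats 2000000 in
lemma BBt_Lmat (r s t : EuclideanSpace ℝ (Fin 4)) :
    (Lmat r * Lmat s * Lmat t) * (Lmat r * Lmat s * Lmat t)ᵀ
      = (‖r‖ ^ 2 * ‖s‖ ^ 2 * ‖t‖ ^ 2) • (1 : Matrix (Fin 4) (Fin 4) ℝ) := by
  refine ext_fin4 ?_ ?_ ?_ ?_ ?_ ?_ ?_ ?_ ?_ ?_ ?_ ?_ ?_ ?_ ?_ ?_ <;>
    (simp only [Matrix.mul_apply, Matrix.transpose_apply, Fin.sum_univ_four, Lmat_00, Lmat_01, Lmat_02, Lmat_03, Lmat_10, Lmat_11, Lmat_12, Lmat_13, Lmat_20, Lmat_21, Lmat_22, Lmat_23, Lmat_30, Lmat_31, Lmat_32, Lmat_33,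
      Matrix.smul_apply, show ((1:Matrix (Fin 4) (Fin 4) ℝ) 0 0) = 1 from rfl, show ((1:Matrix (Fin 4) (Fin 4) ℝ) 0 1) = 0 from rfl, show ((1:Matrix (Fin 4) (Fin 4) ℝ) 0 2) = 0 from rfl, show ((1:Matrix (Fin 4) (Fin 4) ℝ) 0 3) = 0 from rfl, show ((1:Matrix (Fin 4) (Fin 4) ℝ) 1 0) = 0 from rfl, show ((1:Matrix (Fin 4) (Fin 4) ℝ) 1 1) = 1 from rfl, show ((1:Matrix (Fin 4) (Fin 4) ℝ) 1 2) = 0 from rfl, show ((1:Matrix (Fin 4) (Fin 4) ℝ) 1 3) = 0 from rfl, show ((1:Matrix (Fin 4) (Fin 4) ℝ) 2 0) = 0 from rfl, show ((1:Matrix (Fin 4) (Fin 4) ℝ) 2 1) = 0 from rfl, show ((1:Matrix (Fin 4) (Fin 4) ℝ) 2 2) = 1 from rfl, show ((1:Matrix (Fin 4) (Fin 4) ℝ) 2 3) = 0 from rfl, show ((1:Matrix (Fin 4) (Fin 4) ℝ) 3 0) = 0 from rfl, show ((1:Matrix (Fin 4) (Fin 4) ℝ) 3 1) = 0 from rfl,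 show ((1:Matrix (Fin 4) (Fin 4) ℝ) 3 2) = 0 from rfl, show ((1:Matrix (Fin 4) (Fin 4) ℝ) 3 3) = 1 from rfl, smul_eq_mul, mul_one, mul_zero, norm_sq4]
     ring)

set_option maxHeartbeats 2000000 in
lemma tr_Mmat (r s t : EuclideanSpace ℝ (Fin 4)) :
    (Mmat r * Mmat s * Mmat t) 0 0 + (Mmat r * Mmat s * Mmat t) 1 1 + (Mmat r * Mmat s * Mmat t) 2 2 + (Mmat r * Mmat s * Mmat t) 3 3 = -(2 * P3 (embedQ r) (embedQ s) (embedQ t)) := by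
  rw [P3q]
  simp only [Matrix.mul_apply, Fin.sum_univ_four, Mmat_00, Mmat_01, Mmat_02, Mmat_03, Mmat_10, Mmat_11, Mmat_12, Mmat_13, Mmat_20, Mmat_21, Mmat_22, Mmat_23, Mmat_30, Mmat_31, Mmat_32, Mmat_33]
  ring

set_option maxHeartbeats 4000000 in
lemma c2_Mmat (r s t : EuclideanSpace ℝ (Fin 4)) :
    ((Mmat r * Mmat s * Mmat t) 0 0*(Mmat r * Mmat s * Mmat t) 1 1 - (Mmat r * Mmat s * Mmat t) 0 1*(Mmat r * Mmat s * Mmat t) 1 0) + ((Mmat r * Mmat s * Mmat t) 0 0*(Mmat r * Mmat s * Mmat t) 2 2 - (Mmat r * Mmat s * Mmat t) 0 2*(Mmat r * Mmat s * Mmat t) 2 0) + ((Mmat r * Mmat s * Mmat t) 0 0*(Mmat r * Mmat s * Mmat t) 3 3 - (Mmat r * Mmat s * Mmat t) 0 3*(Mmat r * Mmat s * Mmat t) 3 0) + ((Mmat r * Mmat s * Mmat t) 1 1*(Mmat r * Mmat s * Mmat t) 2 2 - (Mmat r * Mmat s * Mmat t) 1 2*(Mmat r * Mmat s * Mmat t)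 2 1) + ((Mmat r * Mmat s * Mmat t) 1 1*(Mmat r * Mmat s * Mmat t) 3 3 - (Mmat r * Mmat s * Mmat t) 1 3*(Mmat r * Mmat s * Mmat t) 3 1) + ((Mmat r * Mmat s * Mmat t) 2 2*(Mmat r * Mmat s * Mmat t) 3 3 - (Mmat r * Mmat s * Mmat t) 2 3*(Mmat r * Mmat s * Mmat t) 3 2) = 0 := by
  simp only [Matrix.mul_apply, Fin.sum_univ_four, Mmat_00, Mmat_01, Mmat_02, Mmat_03, Mmat_10, Mmat_11, Mmat_12, Mmat_13, Mmat_20, Mmat_21, Mmat_22, Mmat_23, Mmat_30, Mmat_31, Mmat_32, Mmat_33, norm_sq4]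
  ring

set_option maxHeartbeats 2000000 in
lemma tr_Lmat (r s t : EuclideanSpace ℝ (Fin 4)) :
    (Lmat r * Lmat s * Lmat t) 0 0 + (Lmat r * Lmat s * Lmat t) 1 1 + (Lmat r * Lmat s * Lmat t) 2 2 + (Lmat r * Lmat s * Lmat t) 3 3 = -(4 * P3 (embedQ r) (embedQ s) (embedQ t)) := by
  rw [P3q]
  simp only [Matrix.mul_apply, Fin.sum_univ_four, Lmat_00, Lmat_01, Lmat_02, Lmat_03, Lmat_10, Lmat_11, Lmat_12, Lmat_13, Lmat_20, Lmat_21, Lmat_22, Lmat_23, Lmat_30, Lmat_31, Lmat_32, Lmat_33]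
  ring

set_option maxHeartbeats 4000000 in
lemma c2_Lmat (r s t : EuclideanSpace ℝ (Fin 4)) :
    ((Lmat r * Lmat s * Lmat t) 0 0*(Lmat r * Lmat s * Lmat t) 1 1 - (Lmat r * Lmat s * Lmat t) 0 1*(Lmat r * Lmat s * Lmat t) 1 0) + ((Lmat r * Lmat s * Lmat t) 0 0*(Lmat r * Lmat s * Lmat t) 2 2 - (Lmat r * Lmat s * Lmat t) 0 2*(Lmat r * Lmat s * Lmat t) 2 0) + ((Lmat r * Lmat s * Lmat t) 0 0*(Lmat r * Lmat s * Lmat t) 3 3 - (Lmat r * Lmat s * Lmat t) 0 3*(Lmat r * Lmat s * Lmat t) 3 0) + ((Lmat r * Lmat s * Lmat t) 1 1*(Lmat r * Lmat s * Lmat t) 2 2 - (Lmat r * Lmat s * Lmat t) 1 2*(Lmat r * Lmat s * Lmat t) 2 1) + ((Lmat r * Lmat s * Lmat t) 1 1*(Lmat r * Lmat s * Lmat t) 3 3 - (Lmat r * Lmat s * Lmat t) 1 3*(Lmat r * Lmat s * Lmat t) 3 1) + ((Lmat r * Lmat s * Lmat t) 2 2*(Lmat r * Lmat s * Lmat t)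 3 3 - (Lmat r * Lmat s * Lmat t) 2 3*(Lmat r * Lmat s * Lmat t) 3 2) = 2 * (‖r‖ ^ 2 * ‖s‖ ^ 2 * ‖t‖ ^ 2) + 4 * (P3 (embedQ r) (embedQ s) (embedQ t))^2 := by
  rw [P3q]
  simp only [Matrix.mul_apply, Fin.sum_univ_four, Lmat_00, Lmat_01, Lmat_02, Lmat_03, Lmat_10, Lmat_11, Lmat_12, Lmat_13, Lmat_20, Lmat_21, Lmat_22, Lmat_23, Lmat_30, Lmat_31, Lmat_32, Lmat_33, norm_sq4]
  ring

lemma det3_Mmat (r s t : EuclideanSpace ℝ (Fin 4)) :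
    (Mmat r * Mmat s * Mmat t).det = -((‖r‖ ^ 2 * ‖s‖ ^ 2 * ‖t‖ ^ 2)^2) := by
  rw [Matrix.det_mul, Matrix.det_mul, det_Mmat, det_Mmat, det_Mmat]
  ring

lemma c3_Mmat (r s t : EuclideanSpace ℝ (Fin 4))
    (hm : (‖r‖ ^ 2 * ‖s‖ ^ 2 * ‖t‖ ^ 2) ≠ 0) :
    ((Mmat r * Mmat s * Mmat t) 1 1*(Mmat r * Mmat s * Mmat t) 2 2*(Mmat r * Mmat s * Mmat t) 3 3 - (Mmat r * Mmat s * Mmat t) 1 1*(Mmat r * Mmat s * Mmat t) 2 3*(Mmat r * Mmat s * Mmat t) 3 2 - (Mmat r * Mmat s * Mmat t) 1 2*(Mmat r * Mmat s * Mmat t) 2 1*(Mmat r * Mmat s * Mmat t) 3 3 + (Mmat r * Mmat s * Mmat t) 1 2*(Mmat r * Mmat s * Mmat t) 2 3*(Mmat r * Mmat s * Mmat t) 3 1 + (Mmat r * Mmat s * Mmat t) 1 3*(Mmat r * Mmat s * Mmat t) 2 1*(Mmat r * Mmat s * Mmat t) 3 2 - (Mmat r * Mmat s * Mmat t) 1 3*(Mmat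 r * Mmat s * Mmat t) 2 2*(Mmat r * Mmat s * Mmat t) 3 1) + ((Mmat r * Mmat s * Mmat t) 0 0*(Mmat r * Mmat s * Mmat t) 2 2*(Mmat r * Mmat s * Mmat t) 3 3 - (Mmat r * Mmat s * Mmat t) 0 0*(Mmat r * Mmat s * Mmat t) 2 3*(Mmat r * Mmat s * Mmat t) 3 2 - (Mmat r * Mmat s * Mmat t) 0 2*(Mmat r * Mmat s * Mmat t) 2 0*(Mmat r * Mmat s * Mmat t) 3 3 + (Mmat r * Mmat s * Mmat t) 0 2*(Mmat r * Mmat s * Mmat t) 2 3*(Mmat r * Mmat s * Mmat t) 3 0 + (Mmat r * Mmat s * Mmat t) 0 3*(Mmat r * Mmat s * Mmat t) 2 0*(Mmat r * Mmat s * Mmat t) 3 2 - (Mmat r * Mmat s * Mmat t) 0 3*(Mmat r * Mmat s * Mmat t) 2 2*(Mmat r * Mmat s * Mmat t) 3 0) + ((Mmat r * Mmat s * Mmat t) 0 0*(Mmat r * Mmat s * Mmat t) 1 1*(Mmat r * Mmat s * Mmat t) 3 3 - (Mmat r * Mmat s * Mmat t) 0 0*(Mmat r * Mmat s * Mmat t)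 1 3*(Mmat r * Mmat s * Mmat t) 3 1 - (Mmat r * Mmat s * Mmat t) 0 1*(Mmat r * Mmat s * Mmat t) 1 0*(Mmat r * Mmat s * Mmat t) 3 3 + (Mmat r * Mmat s * Mmat t) 0 1*(Mmat r * Mmat s * Mmat t) 1 3*(Mmat r * Mmat s * Mmat t) 3 0 + (Mmat r * Mmat s * Mmat t) 0 3*(Mmat r * Mmat s * Mmat t) 1 0*(Mmat r * Mmat s * Mmat t) 3 1 - (Mmat r * Mmat s * Mmat t) 0 3*(Mmat r * Mmat s * Mmat t) 1 1*(Mmat r * Mmat s * Mmat t) 3 0) + ((Mmat r * Mmat s * Mmat t) 0 0*(Mmat r * Mmat s * Mmat t) 1 1*(Mmat r * Mmat s * Mmat t) 2 2 - (Mmat r * Mmat s * Mmat t) 0 0*(Mmat r * Mmat s * Mmat t) 1 2*(Mmat r * Mmat s * Mmat t) 2 1 - (Mmat r * Mmat s * Mmat t) 0 1*(Mmat r * Mmat s * Mmat t) 1 0*(Mmat r * Mmat s * Mmat t) 2 2 + (Mmat r * Mmat s * Mmat t) 0 1*(Mmat r * Mmat s * Mmat t) 1 2*(Mmat r * Mmat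 s * Mmat t) 2 0 + (Mmat r * Mmat s * Mmat t) 0 2*(Mmat r * Mmat s * Mmat t) 1 0*(Mmat r * Mmat s * Mmat t) 2 1 - (Mmat r * Mmat s * Mmat t) 0 2*(Mmat r * Mmat s * Mmat t) 1 1*(Mmat r * Mmat s * Mmat t) 2 0) = 2 * P3 (embedQ r) (embedQ s) (embedQ t) * (‖r‖ ^ 2 * ‖s‖ ^ 2 * ‖t‖ ^ 2) := by
  have hdet := det3_Mmat r s t
  have hunit : IsUnit (Mmat r * Mmat s * Mmat t).det := by
    rw [hdet]; simpa using pow_ne_zero 2 hm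
  have hBinv : (Mmat r * Mmat s * Mmat t)⁻¹
      = (‖r‖ ^ 2 * ‖s‖ ^ 2 * ‖t‖ ^ 2)⁻¹ • (Mmat r * Mmat s * Mmat t)ᵀ := by
    apply Matrix.inv_eq_right_inv
    rw [Matrix.mul_smul, BBt_Mmat, smul_smul, inv_mul_cancel₀ hm, one_smul]
  have hadj : (Mmat r * Mmat s * Mmat t).adjugate
      = (Mmat r * Mmat s * Mmat t).det • (Mmat r * Mmat s * Mmat t)⁻¹ := by
    calc (Mmat r * Mmat s * Mmat t).adjugate
        = ((Mmat r * Mmat s * Mmat t)⁻¹ * (Mmat r * Mmat s * Mmat t)) *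
            (Mmat r * Mmat s * Mmat t).adjugate := by
          rw [Matrix.nonsing_inv_mul _ hunit, Matrix.one_mul]
      _ = (Mmat r * Mmat s * Mmat t)⁻¹ *
            ((Mmat r * Mmat s * Mmat t) * (Mmat r * Mmat s * Mmat t).adjugate) := by
          rw [Matrix.mul_assoc]
      _ = (Mmat r * Mmat s * Mmat t)⁻¹ * ((Mmat r * Mmat s * Mmat t).det • 1) := by
          rw [Matrix.mul_adjugate]
      _ = (Mmat r * Mmat s * Mmat t).det • (Mmat r * Mmat s * Mmat t)⁻¹ := by
          rw [Matrix.mul_smul, Matrix.mul_one]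
  rw [← trace_adj_four, hadj, hBinv, hdet, Matrix.trace_smul, Matrix.trace_smul,
    Matrix.trace_transpose, trace_four, tr_Mmat, smul_eq_mul, smul_eq_mul]
  field_simp

lemma det3_Lmat (r s t : EuclideanSpace ℝ (Fin 4)) :
    (Lmat r * Lmat s * Lmat t).det = ((‖r‖ ^ 2 * ‖s‖ ^ 2 * ‖t‖ ^ 2)^2) := by
  rw [Matrix.det_mul, Matrix.det_mul, det_Lmat, det_Lmat, det_Lmat]
  ring

lemma c3_Lmat (r s t : EuclideanSpace ℝ (Fin 4))
    (hm : (‖r‖ ^ 2 * ‖s‖ ^ 2 * ‖t‖ ^ 2) ≠ 0) :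
    ((Lmat r * Lmat s * Lmat t) 1 1*(Lmat r * Lmat s * Lmat t) 2 2*(Lmat r * Lmat s * Lmat t) 3 3 - (Lmat r * Lmat s * Lmat t) 1 1*(Lmat r * Lmat s * Lmat t) 2 3*(Lmat r * Lmat s * Lmat t) 3 2 - (Lmat r * Lmat s * Lmat t) 1 2*(Lmat r * Lmat s * Lmat t) 2 1*(Lmat r * Lmat s * Lmat t) 3 3 + (Lmat r * Lmat s * Lmat t) 1 2*(Lmat r * Lmat s * Lmat t) 2 3*(Lmat r * Lmat s * Lmat t) 3 1 + (Lmat r * Lmat s * Lmat t) 1 3*(Lmat r * Lmat s * Lmat t) 2 1*(Lmat r * Lmat s * Lmat t) 3 2 - (Lmat r * Lmat s * Lmat t) 1 3*(Lmat r * Lmat s * Lmat t) 2 2*(Lmat r * Lmat s * Lmat t) 3 1) + ((Lmat r * Lmat s * Lmat t) 0 0*(Lmat r * Lmat s * Lmat t) 2 2*(Lmat r * Lmat s * Lmat t) 3 3 - (Lmat r * Lmat s * Lmat t) 0 0*(Lmat r * Lmat s * Lmat t) 2 3*(Lmat r * Lmat s * Lmat t) 3 2 - (Lmat r * Lmat s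 * Lmat t) 0 2*(Lmat r * Lmat s * Lmat t) 2 0*(Lmat r * Lmat s * Lmat t) 3 3 + (Lmat r * Lmat s * Lmat t) 0 2*(Lmat r * Lmat s * Lmat t) 2 3*(Lmat r * Lmat s * Lmat t) 3 0 + (Lmat r * Lmat s * Lmat t) 0 3*(Lmat r * Lmat s * Lmat t) 2 0*(Lmat r * Lmat s * Lmat t) 3 2 - (Lmat r * Lmat s * Lmat t) 0 3*(Lmat r * Lmat s * Lmat t) 2 2*(Lmat r * Lmat s * Lmat t) 3 0) + ((Lmat r * Lmat s * Lmat t) 0 0*(Lmat r * Lmat s * Lmat t) 1 1*(Lmat r * Lmat s * Lmat t) 3 3 - (Lmat r * Lmat s * Lmat t) 0 0*(Lmat r * Lmat s * Lmat t) 1 3*(Lmat r * Lmat s * Lmat t) 3 1 - (Lmat r * Lmat s * Lmat t) 0 1*(Lmat r * Lmat s * Lmat t) 1 0*(Lmat r * Lmat s * Lmat t) 3 3 + (Lmat r * Lmat s * Lmat t) 0 1*(Lmat r * Lmat s * Lmat t) 1 3*(Lmat r * Lmat s * Lmat t) 3 0 + (Lmat r * Lmat s * Lmat t) 0 3*(Lmat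 r * Lmat s * Lmat t) 1 0*(Lmat r * Lmat s * Lmat t) 3 1 - (Lmat r * Lmat s * Lmat t) 0 3*(Lmat r * Lmat s * Lmat t) 1 1*(Lmat r * Lmat s * Lmat t) 3 0) + ((Lmat r * Lmat s * Lmat t) 0 0*(Lmat r * Lmat s * Lmat t) 1 1*(Lmat r * Lmat s * Lmat t) 2 2 - (Lmat r * Lmat s * Lmat t) 0 0*(Lmat r * Lmat s * Lmat t) 1 2*(Lmat r * Lmat s * Lmat t) 2 1 - (Lmat r * Lmat s * Lmat t) 0 1*(Lmat r * Lmat s * Lmat t) 1 0*(Lmat r * Lmat s * Lmat t) 2 2 + (Lmat r * Lmat s * Lmat t) 0 1*(Lmat r * Lmat s * Lmat t) 1 2*(Lmat r * Lmat s * Lmat t) 2 0 + (Lmat r * Lmat s * Lmat t) 0 2*(Lmat r * Lmat s * Lmat t) 1 0*(Lmat r * Lmat s * Lmat t) 2 1 - (Lmat r * Lmat s * Lmat t) 0 2*(Lmat r * Lmat s * Lmat t) 1 1*(Lmat r * Lmat s * Lmat t) 2 0) = -(4 * P3 (embedQ r) (embedQ s) (embedQ t) * (‖r‖ ^ 2 *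 ‖s‖ ^ 2 * ‖t‖ ^ 2)) := by
  have hdet := det3_Lmat r s t
  have hunit : IsUnit (Lmat r * Lmat s * Lmat t).det := by
    rw [hdet]; simpa using pow_ne_zero 2 hm
  have hBinv : (Lmat r * Lmat s * Lmat t)⁻¹
      = (‖r‖ ^ 2 * ‖s‖ ^ 2 * ‖t‖ ^ 2)⁻¹ • (Lmat r * Lmat s * Lmat t)ᵀ := by
    apply Matrix.inv_eq_right_inv
    rw [Matrix.mul_smul, BBt_Lmat, smul_smul, inv_mul_cancel₀ hm, one_smul]
  have hadj : (Lmat r * Lmat s * Lmat t).adjugate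
      = (Lmat r * Lmat s * Lmat t).det • (Lmat r * Lmat s * Lmat t)⁻¹ := by
    calc (Lmat r * Lmat s * Lmat t).adjugate
        = ((Lmat r * Lmat s * Lmat t)⁻¹ * (Lmat r * Lmat s * Lmat t)) *
            (Lmat r * Lmat s * Lmat t).adjugate := by
          rw [Matrix.nonsing_inv_mul _ hunit, Matrix.one_mul]
      _ = (Lmat r * Lmat s * Lmat t)⁻¹ *
            ((Lmat r * Lmat s * Lmat t) * (Lmat r * Lmat s * Lmat t).adjugate) := by
          rw [Matrix.mul_assoc]
      _ = (Lmat r * Lmat s * Lmat t)⁻¹ * ((Lmat r * Lmat s * Lmat t).det • 1) := by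
          rw [Matrix.mul_adjugate]
      _ = (Lmat r * Lmat s * Lmat t).det • (Lmat r * Lmat s * Lmat t)⁻¹ := by
          rw [Matrix.mul_smul, Matrix.mul_one]
  rw [← trace_adj_four, hadj, hBinv, hdet, Matrix.trace_smul, Matrix.trace_smul,
    Matrix.trace_transpose, trace_four, tr_Lmat, smul_eq_mul, smul_eq_mul]
  field_simp

lemma zero_Mmat : Mmat (0 : EuclideanSpace ℝ (Fin 4)) = 0 := by
  ext i j
  fin_cases i <;> fin_cases j <;>
    simp [Mmat_00, Mmat_01, Mmat_02, Mmat_03, Mmat_10, Mmat_11, Mmat_12, Mmat_13, Mmat_20, Mmat_21, Mmat_22, Mmat_23, Mmat_30, Mmat_31, Mmat_32, Mmat_33, show ((0 : EuclideanSpace ℝ (Fin 4)) 0 : ℝ) = 0 from rfl,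
      show ((0 : EuclideanSpace ℝ (Fin 4)) 1 : ℝ) = 0 from rfl,
      show ((0 : EuclideanSpace ℝ (Fin 4)) 2 : ℝ) = 0 from rfl,
      show ((0 : EuclideanSpace ℝ (Fin 4)) 3 : ℝ) = 0 from rfl]

lemma zero_Lmat : Lmat (0 : EuclideanSpace ℝ (Fin 4)) = 0 := by
  ext i j
  fin_cases i <;> fin_cases j <;>
    simp [Lmat_00, Lmat_01, Lmat_02, Lmat_03, Lmat_10, Lmat_11, Lmat_12, Lmat_13, Lmat_20, Lmat_21, Lmat_22, Lmat_23, Lmat_30, Lmat_31, Lmat_32, Lmat_33, show ((0 : EuclideanSpace ℝ (Fin 4)) 0 : ℝ) = 0 from rfl,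
      show ((0 : EuclideanSpace ℝ (Fin 4)) 1 : ℝ) = 0 from rfl,
      show ((0 : EuclideanSpace ℝ (Fin 4)) 2 : ℝ) = 0 from rfl,
      show ((0 : EuclideanSpace ℝ (Fin 4)) 3 : ℝ) = 0 from rfl]

open Polynomial in
set_option maxHeartbeats 1000000 in
lemma prop_Mmat (r s t : EuclideanSpace ℝ (Fin 4)) :
    (Mmat r * Mmat s * Mmat t).charpoly =
      (X ^ 2 - C (‖r‖ ^ 2 * ‖s‖ ^ 2 * ‖t‖ ^ 2)) *
        (X ^ 2 + C (2 * P3 (embedQ r) (embedQ s) (embedQ t)) * X +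
          C (‖r‖ ^ 2 * ‖s‖ ^ 2 * ‖t‖ ^ 2)) := by
  have hz : ((0 : EuclideanSpace ℝ (Fin 4)) 0 : ℝ) = 0 ∧ ((0 : EuclideanSpace ℝ (Fin 4)) 1 : ℝ) = 0
      ∧ ((0 : EuclideanSpace ℝ (Fin 4)) 2 : ℝ) = 0 ∧ ((0 : EuclideanSpace ℝ (Fin 4)) 3 : ℝ) = 0 :=
    ⟨rfl, rfl, rfl, rfl⟩
  obtain ⟨hz0, hz1, hz2, hz3⟩ := hz
  by_cases hr : r = 0
  · subst hr
    have hB : Mmat (0 : EuclideanSpace ℝ (Fin 4)) * Mmat s * Mmat t = 0 := by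
      rw [zero_Mmat, Matrix.zero_mul, Matrix.zero_mul]
    rw [hB, charpoly_four, P3q]
    simp [hz0, hz1, hz2, hz3]
    ring
  by_cases hs : s = 0
  · subst hs
    have hB : Mmat r * Mmat (0 : EuclideanSpace ℝ (Fin 4)) * Mmat t = 0 := by
      rw [zero_Mmat, Matrix.mul_zero, Matrix.zero_mul]
    rw [hB, charpoly_four, P3q]
    simp [hz0, hz1, hz2, hz3]
    ring
  by_cases ht : t = 0
  · subst ht
    have hB : Mmat r * Mmat s * Mmat (0 : EuclideanSpace ℝ (Fin 4)) = 0 := by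
      rw [zero_Mmat, Matrix.mul_zero]
    rw [hB, charpoly_four, P3q]
    simp [hz0, hz1, hz2, hz3]
    ring
  have hm : (‖r‖ ^ 2 * ‖s‖ ^ 2 * ‖t‖ ^ 2) ≠ 0 := by
    have h1 : ‖r‖ ≠ 0 := norm_ne_zero_iff.2 hr
    have h2 : ‖s‖ ≠ 0 := norm_ne_zero_iff.2 hs
    have h3 : ‖t‖ ≠ 0 := norm_ne_zero_iff.2 ht
    positivity
  rw [charpoly_four, tr_Mmat, c2_Mmat, c3_Mmat r s t hm]
  have hd : (Mmat r * Mmat s * Mmat t) 0 0*(Mmat r * Mmat s * Mmat t) 1 1*(Mmat r * Mmat s * Mmat t) 2 2*(Mmat r * Mmat s * Mmat t) 3 3 - (Mmat r * Mmat s * Mmat t) 0 0*(Mmat r * Mmat s * Mmat t) 1 1*(Mmat r * Mmat s * Mmat t) 2 3*(Mmat r * Mmat s * Mmat t) 3 2 - (Mmat r * Mmat s * Mmat t) 0 0*(Mmat r * Mmat s * Mmat t) 1 2*(Mmat r * Mmat s * Mmat t) 2 1*(Mmat r * Mmat s * Mmat t) 3 3 + (Mmat r * Mmat s * Mmat t)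 0 0*(Mmat r * Mmat s * Mmat t) 1 2*(Mmat r * Mmat s * Mmat t) 2 3*(Mmat r * Mmat s * Mmat t) 3 1 + (Mmat r * Mmat s * Mmat t) 0 0*(Mmat r * Mmat s * Mmat t) 1 3*(Mmat r * Mmat s * Mmat t) 2 1*(Mmat r * Mmat s * Mmat t) 3 2 - (Mmat r * Mmat s * Mmat t) 0 0*(Mmat r * Mmat s * Mmat t) 1 3*(Mmat r * Mmat s * Mmat t) 2 2*(Mmat r * Mmat s * Mmat t) 3 1 - (Mmat r * Mmat s * Mmat t) 0 1*(Mmat r * Mmat s * Mmat t) 1 0*(Mmat r * Mmat s * Mmat t) 2 2*(Mmat r * Mmat s * Mmat t) 3 3 + (Mmat r * Mmat s * Mmat t) 0 1*(Mmat r * Mmat s * Mmat t) 1 0*(Mmat r * Mmat s * Mmat t) 2 3*(Mmat r * Mmat s * Mmat t) 3 2 + (Mmat r * Mmat s * Mmat t) 0 1*(Mmat r * Mmat s * Mmat t) 1 2*(Mmat r * Mmat s * Mmat t) 2 0*(Mmat r * Mmat s * Mmat t) 3 3 - (Mmat r * Mmat s * Mmat t) 0 1*(Mmat r * Mmat s *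 Mmat t) 1 2*(Mmat r * Mmat s * Mmat t) 2 3*(Mmat r * Mmat s * Mmat t) 3 0 - (Mmat r * Mmat s * Mmat t) 0 1*(Mmat r * Mmat s * Mmat t) 1 3*(Mmat r * Mmat s * Mmat t) 2 0*(Mmat r * Mmat s * Mmat t) 3 2 + (Mmat r * Mmat s * Mmat t) 0 1*(Mmat r * Mmat s * Mmat t) 1 3*(Mmat r * Mmat s * Mmat t) 2 2*(Mmat r * Mmat s * Mmat t) 3 0 + (Mmat r * Mmat s * Mmat t) 0 2*(Mmat r * Mmat s * Mmat t) 1 0*(Mmat r * Mmat s * Mmat t) 2 1*(Mmat r * Mmat s * Mmat t) 3 3 - (Mmat r * Mmat s * Mmat t) 0 2*(Mmat r * Mmat s * Mmat t) 1 0*(Mmat r * Mmat s * Mmat t) 2 3*(Mmat r * Mmat s * Mmat t) 3 1 - (Mmat r * Mmat s * Mmat t) 0 2*(Mmat r * Mmat s * Mmat t) 1 1*(Mmat r * Mmat s * Mmat t) 2 0*(Mmat r * Mmat s * Mmat t) 3 3 + (Mmat r * Mmat s * Mmat t) 0 2*(Mmat r * Mmat s * Mmat t) 1 1*(Mmat r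 * Mmat s * Mmat t) 2 3*(Mmat r * Mmat s * Mmat t) 3 0 + (Mmat r * Mmat s * Mmat t) 0 2*(Mmat r * Mmat s * Mmat t) 1 3*(Mmat r * Mmat s * Mmat t) 2 0*(Mmat r * Mmat s * Mmat t) 3 1 - (Mmat r * Mmat s * Mmat t) 0 2*(Mmat r * Mmat s * Mmat t) 1 3*(Mmat r * Mmat s * Mmat t) 2 1*(Mmat r * Mmat s * Mmat t) 3 0 - (Mmat r * Mmat s * Mmat t) 0 3*(Mmat r * Mmat s * Mmat t) 1 0*(Mmat r * Mmat s * Mmat t) 2 1*(Mmat r * Mmat s * Mmat t) 3 2 + (Mmat r * Mmat s * Mmat t) 0 3*(Mmat r * Mmat s * Mmat t) 1 0*(Mmat r * Mmat s * Mmat t) 2 2*(Mmat r * Mmat s * Mmat t) 3 1 + (Mmat r * Mmat s * Mmat t) 0 3*(Mmat r * Mmat s * Mmat t) 1 1*(Mmat r * Mmat s * Mmat t) 2 0*(Mmat r * Mmat s * Mmat t) 3 2 - (Mmat r * Mmat s * Mmat t) 0 3*(Mmat r * Mmat s * Mmat t) 1 1*(Mmat r * Mmat s * Mmat t) 2 2*(Mmat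 r * Mmat s * Mmat t) 3 0 - (Mmat r * Mmat s * Mmat t) 0 3*(Mmat r * Mmat s * Mmat t) 1 2*(Mmat r * Mmat s * Mmat t) 2 0*(Mmat r * Mmat s * Mmat t) 3 1 + (Mmat r * Mmat s * Mmat t) 0 3*(Mmat r * Mmat s * Mmat t) 1 2*(Mmat r * Mmat s * Mmat t) 2 1*(Mmat r * Mmat s * Mmat t) 3 0 = (Mmat r * Mmat s * Mmat t).det := (det_four _).symm
  rw [hd, det3_Mmat]
  simp only [_root_.map_neg, Polynomial.C_mul, Polynomial.C_add, Polynomial.C_pow, _root_.map_ofNat, Polynomial.C_0, Polynomial.C_1]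
  ring

open Polynomial in
set_option maxHeartbeats 1000000 in
lemma prop_Lmat (r s t : EuclideanSpace ℝ (Fin 4)) :
    (Lmat r * Lmat s * Lmat t).charpoly =
      (X ^ 2 + C (2 * P3 (embedQ r) (embedQ s) (embedQ t)) * X +
        C (‖r‖ ^ 2 * ‖s‖ ^ 2 * ‖t‖ ^ 2)) ^ 2 := by
  have hz : ((0 : EuclideanSpace ℝ (Fin 4)) 0 : ℝ) = 0 ∧ ((0 : EuclideanSpace ℝ (Fin 4)) 1 : ℝ) = 0
      ∧ ((0 : EuclideanSpace ℝ (Fin 4)) 2 : ℝ) = 0 ∧ ((0 : EuclideanSpace ℝ (Fin 4)) 3 : ℝ) = 0 :=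
    ⟨rfl, rfl, rfl, rfl⟩
  obtain ⟨hz0, hz1, hz2, hz3⟩ := hz
  by_cases hr : r = 0
  · subst hr
    have hB : Lmat (0 : EuclideanSpace ℝ (Fin 4)) * Lmat s * Lmat t = 0 := by
      rw [zero_Lmat, Matrix.zero_mul, Matrix.zero_mul]
    rw [hB, charpoly_four, P3q]
    simp [hz0, hz1, hz2, hz3]
    ring
  by_cases hs : s = 0
  · subst hs
    have hB : Lmat r * Lmat (0 : EuclideanSpace ℝ (Fin 4)) * Lmat t = 0 := by
      rw [zero_Lmat, Matrix.mul_zero, Matrix.zero_mul]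
    rw [hB, charpoly_four, P3q]
    simp [hz0, hz1, hz2, hz3]
    ring
  by_cases ht : t = 0
  · subst ht
    have hB : Lmat r * Lmat s * Lmat (0 : EuclideanSpace ℝ (Fin 4)) = 0 := by
      rw [zero_Lmat, Matrix.mul_zero]
    rw [hB, charpoly_four, P3q]
    simp [hz0, hz1, hz2, hz3]
    ring
  have hm : (‖r‖ ^ 2 * ‖s‖ ^ 2 * ‖t‖ ^ 2) ≠ 0 := by
    have h1 : ‖r‖ ≠ 0 := norm_ne_zero_iff.2 hr
    have h2 : ‖s‖ ≠ 0 := norm_ne_zero_iff.2 hs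
    have h3 : ‖t‖ ≠ 0 := norm_ne_zero_iff.2 ht
    positivity
  rw [charpoly_four, tr_Lmat, c2_Lmat, c3_Lmat r s t hm]
  have hd : (Lmat r * Lmat s * Lmat t) 0 0*(Lmat r * Lmat s * Lmat t) 1 1*(Lmat r * Lmat s * Lmat t) 2 2*(Lmat r * Lmat s * Lmat t) 3 3 - (Lmat r * Lmat s * Lmat t) 0 0*(Lmat r * Lmat s * Lmat t) 1 1*(Lmat r * Lmat s * Lmat t) 2 3*(Lmat r * Lmat s * Lmat t) 3 2 - (Lmat r * Lmat s * Lmat t) 0 0*(Lmat r * Lmat s * Lmat t) 1 2*(Lmat r * Lmat s * Lmat t) 2 1*(Lmat r * Lmat s * Lmat t) 3 3 + (Lmat r * Lmat s * Lmat t) 0 0*(Lmat r * Lmat s * Lmat t) 1 2*(Lmat r * Lmat s * Lmat t) 2 3*(Lmat r * Lmat s * Lmat t) 3 1 + (Lmat r * Lmat s * Lmat t) 0 0*(Lmat r * Lmat s * Lmat t) 1 3*(Lmat r * Lmat s * Lmat t) 2 1*(Lmat r * Lmat s * Lmat t) 3 2 - (Lmat r * Lmat s * Lmat t) 0 0*(Lmat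 r * Lmat s * Lmat t) 1 3*(Lmat r * Lmat s * Lmat t) 2 2*(Lmat r * Lmat s * Lmat t) 3 1 - (Lmat r * Lmat s * Lmat t) 0 1*(Lmat r * Lmat s * Lmat t) 1 0*(Lmat r * Lmat s * Lmat t) 2 2*(Lmat r * Lmat s * Lmat t) 3 3 + (Lmat r * Lmat s * Lmat t) 0 1*(Lmat r * Lmat s * Lmat t) 1 0*(Lmat r * Lmat s * Lmat t) 2 3*(Lmat r * Lmat s * Lmat t) 3 2 + (Lmat r * Lmat s * Lmat t) 0 1*(Lmat r * Lmat s * Lmat t) 1 2*(Lmat r * Lmat s * Lmat t) 2 0*(Lmat r * Lmat s * Lmat t) 3 3 - (Lmat r * Lmat s * Lmat t) 0 1*(Lmat r * Lmat s * Lmat t) 1 2*(Lmat r * Lmat s * Lmat t) 2 3*(Lmat r * Lmat s * Lmat t) 3 0 - (Lmat r * Lmat s * Lmat t) 0 1*(Lmat r * Lmat s * Lmat t) 1 3*(Lmat r * Lmat s * Lmat t) 2 0*(Lmat r * Lmat s * Lmat t) 3 2 + (Lmat r * Lmat s * Lmat t) 0 1*(Lmat r * Lmat s * Lmat t) 1 3*(Lmat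 r * Lmat s * Lmat t) 2 2*(Lmat r * Lmat s * Lmat t) 3 0 + (Lmat r * Lmat s * Lmat t) 0 2*(Lmat r * Lmat s * Lmat t) 1 0*(Lmat r * Lmat s * Lmat t) 2 1*(Lmat r * Lmat s * Lmat t) 3 3 - (Lmat r * Lmat s * Lmat t) 0 2*(Lmat r * Lmat s * Lmat t) 1 0*(Lmat r * Lmat s * Lmat t) 2 3*(Lmat r * Lmat s * Lmat t) 3 1 - (Lmat r * Lmat s * Lmat t) 0 2*(Lmat r * Lmat s * Lmat t) 1 1*(Lmat r * Lmat s * Lmat t) 2 0*(Lmat r * Lmat s * Lmat t) 3 3 + (Lmat r * Lmat s * Lmat t) 0 2*(Lmat r * Lmat s * Lmat t) 1 1*(Lmat r * Lmat s * Lmat t) 2 3*(Lmat r * Lmat s * Lmat t) 3 0 + (Lmat r * Lmat s * Lmat t) 0 2*(Lmat r * Lmat s * Lmat t) 1 3*(Lmat r * Lmat s * Lmat t) 2 0*(Lmat r * Lmat s * Lmat t) 3 1 - (Lmat r * Lmat s * Lmat t) 0 2*(Lmat r * Lmat s * Lmat t) 1 3*(Lmat r * Lmat s * Lmat t) 2 1*(Lmat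 r * Lmat s * Lmat t) 3 0 - (Lmat r * Lmat s * Lmat t) 0 3*(Lmat r * Lmat s * Lmat t) 1 0*(Lmat r * Lmat s * Lmat t) 2 1*(Lmat r * Lmat s * Lmat t) 3 2 + (Lmat r * Lmat s * Lmat t) 0 3*(Lmat r * Lmat s * Lmat t) 1 0*(Lmat r * Lmat s * Lmat t) 2 2*(Lmat r * Lmat s * Lmat t) 3 1 + (Lmat r * Lmat s * Lmat t) 0 3*(Lmat r * Lmat s * Lmat t) 1 1*(Lmat r * Lmat s * Lmat t) 2 0*(Lmat r * Lmat s * Lmat t) 3 2 - (Lmat r * Lmat s * Lmat t) 0 3*(Lmat r * Lmat s * Lmat t) 1 1*(Lmat r * Lmat s * Lmat t) 2 2*(Lmat r * Lmat s * Lmat t) 3 0 - (Lmat r * Lmat s * Lmat t) 0 3*(Lmat r * Lmat s * Lmat t) 1 2*(Lmat r * Lmat s * Lmat t) 2 0*(Lmat r * Lmat s * Lmat t) 3 1 + (Lmat r * Lmat s * Lmat t) 0 3*(Lmat r * Lmat s * Lmat t) 1 2*(Lmat r * Lmat s * Lmat t) 2 1*(Lmat r * Lmat s * Lmat t) 3 0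 = (Lmat r * Lmat s * Lmat t).det := (det_four _).symm
  rw [hd, det3_Lmat]
  simp only [_root_.map_neg, Polynomial.C_mul, Polynomial.C_add, Polynomial.C_pow, _root_.map_ofNat, Polynomial.C_0, Polynomial.C_1]
  ring

open Polynomial in
/-- **Property 5** of the matrices `M_s`, `L_s`: for `r, s, t ∈ ℝ⁴`, with
`p = P(r,s,t)` (under the quaternionic embedding) and `m = |r|²|s|²|t|²`, the
characteristic polynomials of `M_r·M_s·M_t` and `L_r·L_s·L_t` are
`(T² − m)(T² + 2pT + m)` and `(T² + 2pT + m)²` respectively. -/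
theorem property_5 (r s t : EuclideanSpace ℝ (Fin 4)) :
    (Mmat r * Mmat s * Mmat t).charpoly =
      (X ^ 2 - C (‖r‖ ^ 2 * ‖s‖ ^ 2 * ‖t‖ ^ 2)) *
        (X ^ 2 + C (2 * P3 (embedQ r) (embedQ s) (embedQ t)) * X +
          C (‖r‖ ^ 2 * ‖s‖ ^ 2 * ‖t‖ ^ 2)) ∧
    (Lmat r * Lmat s * Lmat t).charpoly =
      (X ^ 2 + C (2 * P3 (embedQ r) (embedQ s) (embedQ t)) * X +
        C (‖r‖ ^ 2 * ‖s‖ ^ 2 * ‖t‖ ^ 2)) ^ 2 :=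
  ⟨prop_Mmat r s t, prop_Lmat r s t⟩
end
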